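/- Let b : ℕ → ℝ satisfy b(4) = 7/6 and the recurrence b(N+1) = (1 - 3/N)·b(N) + (5N - 3)/12 for all integers N ≥ 4. Then b(N) = N(N-1)/12 + 1/((N-1)(N-2)(N-3)) for all integers N ≥ 4, and consequently the centered correlation b(N) - (N/2)·(N/6) = -N/12 + 1/((N-1)(N-2)(N-3)) for all integers N ≥ 4. (This is the correlation ⟨N₁N₂⟩ between the numbers of degree-one and degree-two vertices in a random recursive hypergraph.) -/

import Mathlib

/-- The correlation `⟨N₁N₂⟩` between the numbers of degree-one and degree-two
vertices in an RRH, and the centered correlation. -/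
theorem rrh_degree_one_two_correlation (b : ℕ → ℝ) (h4 : b 4 = 7 / 6)
    (hrec : ∀ N : ℕ, 4 ≤ N →
      b (N + 1) = (1 - 3 / (N : ℝ)) * b N + (5 * (N : ℝ) - 3) / 12) :
    (∀ N : ℕ, 4 ≤ N →
      b N = (N : ℝ) * ((N : ℝ) - 1) / 12
        + 1 / (((N : ℝ) - 1) * ((N : ℝ) - 2) * ((N : ℝ) - 3))) ∧
    (∀ N : ℕ, 4 ≤ N →
      b N - ((N : ℝ) / 2) * ((N : ℝ) / 6)
        = -(N : ℝ) / 12 + 1 / (((N : ℝ) - 1) * ((N : ℝ) - 2) * ((N : ℝ) - 3))) := by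
  have main : ∀ N : ℕ, 4 ≤ N →
      b N = (N : ℝ) * ((N : ℝ) - 1) / 12
        + 1 / (((N : ℝ) - 1) * ((N : ℝ) - 2) * ((N : ℝ) - 3)) := by
    intro N hN
    induction N, hN using Nat.le_induction with
    | base => norm_num [h4]
    | succ n hn ih =>
      have hn' : (4 : ℝ) ≤ (n : ℝ) := by exact_mod_cast hn
      have h0 : (n : ℝ) ≠ 0 := by linarith
      have h1 : (n : ℝ) - 1 ≠ 0 := by linarith
      have h2 : (n : ℝ) - 2 ≠ 0 := by linarith
      have h3 : (n : ℝ) - 3 ≠ 0 := by linarith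
      have hp : (n : ℝ) * 2 - (n : ℝ)^2 * 3 + (n : ℝ)^3 ≠ 0 := by
        have : (n : ℝ) * 2 - (n : ℝ)^2 * 3 + (n : ℝ)^3
            = (n : ℝ) * (((n : ℝ) - 1) * ((n : ℝ) - 2)) := by ring
        rw [this]
        exact mul_ne_zero h0 (mul_ne_zero h1 h2)
      rw [hrec n hn, ih]
      push_cast
      field_simp
      ring_nf
      have hq : (2 - (n : ℝ) * 3 + (n : ℝ)^2) ≠ 0 := by
        have : (2 - (n : ℝ) * 3 + (n : ℝ)^2) = ((n : ℝ) - 1) * ((n : ℝ) - 2) := by ring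
        rw [this]
        exact mul_ne_zero h1 h2
      field_simp
      ring
  refine ⟨main, fun N hN => ?_⟩
  rw [main N hN]
  ring
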